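/- (Corona pedigree collapse) Let G be a finite simple graph, k ≥ 1, and let S be a nonempty set of vertices such that the subgraph of G induced on S is connected and every vertex u ∈ S satisfies C(u,G) = k and CS(u,G) = 1. Then for any edge e = {u,m} of G with u ∈ S and m ∈ SN(u,G) (in particular for any edge with both endpoints in S), removing e makes every vertex of S collapse: C(w, G−e) = k − 1 for all w ∈ S. -/

import Mathlib

/-- A set `S` of vertices is `k`-supported in `G` if every vertex of `S`
has at least `k` neighbors inside `S`. -/
def kSupported {V : Type*} (G : SimpleGraph V) (k : ℕ) (S : Set V) : Prop :=
  ∀ i ∈ S, k ≤ {j | j ∈ S ∧ G.Adj i j}.ncard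

/-- The `k`-core of `G`: the union of all `k`-supported sets. -/
def kCore {V : Type*} (G : SimpleGraph V) (k : ℕ) : Set V :=
  ⋃₀ {S | kSupported G k S}

/-- The core value `C(i,G)` of a vertex `i`: the largest `k` with `i ∈ V_k(G)`. -/
noncomputable def coreValue {V : Type*} (G : SimpleGraph V) (i : V) : ℕ :=
  sSup {k | i ∈ kCore G k}

/-- The supportive neighbors of `i` at level `k`:
neighbors `j` of `i` with core value at least `k`. -/
def SN {V : Type*} (G : SimpleGraph V) (i : V) (k : ℕ) : Set V :=
  {j | G.Adj i j ∧ k ≤ coreValue G j}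

/-- `SN(i,G)`: abbreviation for `SN(i, C(i,G), G)`. -/
noncomputable def SNc {V : Type*} (G : SimpleGraph V) (i : V) : Set V :=
  SN G i (coreValue G i)

/-- The core strength `CS(i,G) = |SN(i,G)| - C(i,G) + 1`. -/
noncomputable def CS {V : Type*} (G : SimpleGraph V) (i : V) : ℕ :=
  (SNc G i).ncard - coreValue G i + 1

section Aux

variable {V : Type*}

lemma kSupported_mono {G : SimpleGraph V} {j k : ℕ} (h : j ≤ k) {S : Set V}
    (hS : kSupported G k S) : kSupported G j S :=
  fun i hi => h.trans (hS i hi)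

lemma mem_kCore_of_kSupported {G : SimpleGraph V} {k : ℕ} {S : Set V}
    (hS : kSupported G k S) {i : V} (hi : i ∈ S) : i ∈ kCore G k :=
  Set.mem_sUnion.2 ⟨S, hS, hi⟩

lemma kCore_anti {G : SimpleGraph V} {j k : ℕ} (h : j ≤ k) : kCore G k ⊆ kCore G j := by
  rintro i ⟨S, hS, hiS⟩
  exact ⟨S, kSupported_mono h hS, hiS⟩

lemma kSupported_kCore [Fintype V] (G : SimpleGraph V) (k : ℕ) :
    kSupported G k (kCore G k) := by
  rintro i ⟨S, hS, hiS⟩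
  refine (hS i hiS).trans (Set.ncard_le_ncard ?_ (Set.toFinite _))
  rintro j ⟨hjS, hadj⟩
  exact ⟨mem_kCore_of_kSupported hS hjS, hadj⟩

lemma mem_kCore_zero (G : SimpleGraph V) (i : V) : i ∈ kCore G 0 :=
  mem_kCore_of_kSupported (S := Set.univ) (fun _ _ => Nat.zero_le _) (Set.mem_univ i)

lemma bddAbove_core [Fintype V] (G : SimpleGraph V) (i : V) :
    BddAbove {k | i ∈ kCore G k} := by
  refine ⟨Fintype.card V, ?_⟩
  rintro k ⟨Su, hSu, hiS⟩
  calc k ≤ _ := hSu i hiS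
    _ ≤ (Set.univ : Set V).ncard := Set.ncard_le_ncard (Set.subset_univ _) (Set.toFinite _)
    _ = Fintype.card V := by rw [Set.ncard_univ, Nat.card_eq_fintype_card]

lemma mem_kCore_coreValue [Fintype V] (G : SimpleGraph V) (i : V) :
    i ∈ kCore G (coreValue G i) :=
  Nat.sSup_mem ⟨0, mem_kCore_zero G i⟩ (bddAbove_core G i)

lemma le_coreValue [Fintype V] {G : SimpleGraph V} {i : V} {k : ℕ}
    (h : i ∈ kCore G k) : k ≤ coreValue G i :=
  le_csSup (bddAbove_core G i) h

end Aux

theorem stmt_13 {V : Type*} [Fintype V] (G : SimpleGraph V) (k : ℕ)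
    (hk : 1 ≤ k) (S : Set V) (hS : S.Nonempty)
    (hconn : (G.induce S).Connected)
    (hcore : ∀ u ∈ S, coreValue G u = k ∧ CS G u = 1)
    (u m : V) (hu : u ∈ S) (hm : m ∈ SNc G u) :
    ∀ w ∈ S, coreValue (G.deleteEdges {s(u, m)}) w = k - 1 := by
  set G' := G.deleteEdges {s(u, m)} with hG'
  have hG'le : ∀ {a b : V}, G'.Adj a b → G.Adj a b := by
    intro a b h
    exact (SimpleGraph.deleteEdges_adj.mp h).1
  -- every vertex of S has exactly k supportive neighbors
  have hSNcard : ∀ s ∈ S, (SNc G s).ncard = k := by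
    intro s hs
    obtain ⟨hcv, hcs⟩ := hcore s hs
    have hle : (SNc G s).ncard ≤ k := by
      unfold CS at hcs
      rw [hcv] at hcs
      omega
    have hge : k ≤ (SNc G s).ncard := by
      have hmem : s ∈ kCore G k := by
        have := mem_kCore_coreValue G s
        rwa [hcv] at this
      have h1 : k ≤ {j | j ∈ kCore G k ∧ G.Adj s j}.ncard := kSupported_kCore G k s hmem
      refine h1.trans (Set.ncard_le_ncard ?_ (Set.toFinite _))
      rintro j ⟨hj, hadj⟩
      unfold SNc SN
      rw [hcv]
      exact ⟨hadj, le_coreValue hj⟩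
    omega
  -- T : the k-core of G'
  set T : Set V := kCore G' k with hT
  have hTsubcore : T ⊆ kCore G k := by
    have : kSupported G k T := by
      intro i hi
      refine (kSupported_kCore G' k i hi).trans (Set.ncard_le_ncard ?_ (Set.toFinite _))
      rintro j ⟨hj, hadj⟩
      exact ⟨hj, hG'le hadj⟩
    exact fun i hi => mem_kCore_of_kSupported this hi
  have hcvT : ∀ j ∈ T, k ≤ coreValue G j := fun j hj => le_coreValue (hTsubcore hj)
  -- key exclusion lemma
  have claim : ∀ s ∈ S, ∀ x : V, x ∈ SNc G s →
      (∀ j ∈ T, G'.Adj s j → j ≠ x) → s ∉ T := by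
    intro s hs x hx havoid hsT
    have hcvs := (hcore s hs).1
    have hsub : {j | j ∈ T ∧ G'.Adj s j} ⊆ SNc G s \ {x} := by
      rintro j ⟨hjT, hadj⟩
      refine ⟨?_, havoid j hjT hadj⟩
      unfold SNc SN
      rw [hcvs]
      exact ⟨hG'le hadj, hcvT j hjT⟩
    have h1 : k ≤ {j | j ∈ T ∧ G'.Adj s j}.ncard := kSupported_kCore G' k s hsT
    have h2 : {j | j ∈ T ∧ G'.Adj s j}.ncard ≤ (SNc G s \ {x}).ncard :=
      Set.ncard_le_ncard hsub (Set.toFinite _)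
    have h3 : (SNc G s \ {x}).ncard = (SNc G s).ncard - 1 :=
      Set.ncard_diff_singleton_of_mem hx
    rw [hSNcard s hs] at h3
    omega
  have humne : u ≠ m := (hm.1).ne
  -- u is not in T
  have huT : u ∉ T := by
    refine claim u hu m hm ?_
    intro j _ hadj hjm
    subst hjm
    have := (SimpleGraph.deleteEdges_adj.mp hadj).2
    simp at this
  -- propagate along walks in the induced graph
  have hstep : ∀ s ∈ S, ∀ s' ∈ S, G.Adj s' s → s ∉ T → s' ∉ T := by
    intro s hs s' hs' hadj hsT
    refine claim s' hs' s ?_ ?_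
    · unfold SNc SN
      rw [(hcore s' hs').1]
      exact ⟨hadj, le_of_eq (hcore s hs).1.symm⟩
    · intro j hj _ hjs
      subst hjs
      exact hsT hj
  have hwalk : ∀ {x y : ↑S}, (G.induce S).Walk x y → (x : V) ∉ T → (y : V) ∉ T := by
    intro x y p
    induction p with
    | nil => exact id
    | @cons a b c h p ih =>
      intro ha
      exact ih (hstep (a : V) a.2 (b : V) b.2 (SimpleGraph.comap_adj.mp h).symm ha)
  have hnotT : ∀ w ∈ S, w ∉ T := by
    intro w hw
    obtain ⟨p⟩ := hconn.preconnected ⟨u, hu⟩ ⟨w, hw⟩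
    exact hwalk p huT
  -- lower bound: the old k-core is (k-1)-supported in G'
  have hlow : kSupported G' (k - 1) (kCore G k) := by
    intro i hi
    set A := {j | j ∈ kCore G k ∧ G.Adj i j} with hA
    set B := {j | j ∈ kCore G k ∧ G'.Adj i j} with hB
    have hx : ∃ x : V, A ⊆ insert x B := by
      have key : ∀ j ∈ A, j ∉ B → (i = u ∧ j = m) ∨ (i = m ∧ j = u) := by
        rintro j ⟨hj, hadj⟩ hjB
        have hnadj : ¬ G'.Adj i j := fun h => hjB ⟨hj, h⟩
        rw [hG', SimpleGraph.deleteEdges_adj] at hnadj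
        push_neg at hnadj
        have heq := hnadj hadj
        simp only [Set.mem_singleton_iff] at heq
        rwa [Sym2.eq_iff] at heq
      by_cases hiu : i = u
      · refine ⟨m, ?_⟩
        rintro j hjA
        by_cases hjB : j ∈ B
        · exact Set.mem_insert_of_mem _ hjB
        · rcases key j hjA hjB with ⟨_, hjm⟩ | ⟨him, _⟩
          · rw [hjm]; exact Set.mem_insert _ _
          · exact absurd (hiu.symm.trans him) humne
      · refine ⟨u, ?_⟩
        rintro j hjA
        by_cases hjB : j ∈ B
        · exact Set.mem_insert_of_mem _ hjB
        · rcases key j hjA hjB with ⟨hiu', _⟩ | ⟨_, hju⟩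
          · exact absurd hiu' hiu
          · rw [hju]; exact Set.mem_insert _ _
    obtain ⟨x, hxsub⟩ := hx
    have h1 : k ≤ A.ncard := kSupported_kCore G k i hi
    have h2 : A.ncard ≤ (insert x B).ncard := Set.ncard_le_ncard hxsub (Set.toFinite _)
    have h3 : (insert x B).ncard ≤ B.ncard + 1 := Set.ncard_insert_le _ _
    omega
  -- conclude
  intro w hw
  have hwcore : w ∈ kCore G k := by
    have := mem_kCore_coreValue G w
    rwa [(hcore w hw).1] at this
  have hge : k - 1 ≤ coreValue G' w :=
    le_coreValue (mem_kCore_of_kSupported hlow hwcore)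
  have hle : coreValue G' w ≤ k - 1 := by
    refine csSup_le ⟨0, mem_kCore_zero G' w⟩ ?_
    intro j hj
    by_contra hjk
    push_neg at hjk
    have hkj : k ≤ j := by omega
    exact hnotT w hw (kCore_anti hkj hj)
  omega
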